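/- Let μ be a finite Borel measure on T = {0,1,...,m-1}^ℕ, and for each n ≥ 1 let Γ_n be a union of m-adic intervals of level n. Suppose there is K > 0 such that for every n ≥ 0 and every interval I of level n, μ(I ∩ Γ_{n+1}) ≥ K·μ(I). Then for μ-a.e. x ∈ T and every positive integer d, the sequence of balls {B_n(x)}_{n≥0} contains d consecutive marked balls, i.e., there exists n such that B_{n+1}(x) ⊆ Γ_{n+1}, ..., B_{n+d}(x) ⊆ Γ_{n+d}. -/

import Mathlib

open MeasureTheory Filter Set ENNReal

open Classical in
noncomputable def tdist {m : ℕ} (a b : ℕ → Fin m) : ℝ :=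
  if h : ∃ n, a n ≠ b n then (m : ℝ) ^ (-(Nat.find h : ℤ)) else 0

def cyl {m : ℕ} (n : ℕ) (x : ℕ → Fin m) : Set (ℕ → Fin m) :=
  {y | ∀ i < n, y i = x i}

def IsLevelUnion {m : ℕ} (n : ℕ) (S : Set (ℕ → Fin m)) : Prop :=
  ∀ x ∈ S, cyl n x ⊆ S

section Aux

variable {m : ℕ}

lemma mem_cyl_self (n : ℕ) (x : ℕ → Fin m) : x ∈ cyl n x := fun _ _ => rfl

lemma cyl_anti {n n' : ℕ} (h : n ≤ n') (x : ℕ → Fin m) : cyl n' x ⊆ cyl n x :=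
  fun _ hy i hi => hy i (lt_of_lt_of_le hi h)

lemma cyl_eq_of_mem {n : ℕ} {x y : ℕ → Fin m} (h : y ∈ cyl n x) : cyl n y = cyl n x := by
  ext z
  constructor <;> intro hz i hi
  · rw [← h i hi]; exact hz i hi
  · rw [hz i hi]; exact (h i hi).symm

lemma measurableSet_cyl (n : ℕ) (x : ℕ → Fin m) : MeasurableSet (cyl n x) := by
  have : cyl n x = ⋂ i ∈ Finset.range n, (fun y : ℕ → Fin m => y i) ⁻¹' {x i} := by
    ext y
    simp [cyl, Set.mem_iInter]
  rw [this]
  exact MeasurableSet.biInter (Finset.range n).countable_toSet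
    fun i _ => (measurable_pi_apply i) (measurableSet_singleton (x i))

noncomputable def extw (hm : 0 < m) (n : ℕ) (w : Fin n → Fin m) : ℕ → Fin m :=
  fun i => if h : i < n then w ⟨i, h⟩ else ⟨0, hm⟩

lemma cyl_extw_restrict (hm : 0 < m) (n : ℕ) (x : ℕ → Fin m) :
    cyl n (extw hm n (fun i => x i.1)) = cyl n x := by
  rw [show cyl n x = cyl n (extw hm n (fun i => x i.1)) from
    (cyl_eq_of_mem (fun i hi => by simp [extw, hi])).symm]

lemma cyl_extw_disjoint (hm : 0 < m) (n : ℕ) {w w' : Fin n → Fin m} (h : w ≠ w') :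
    Disjoint (cyl n (extw hm n w)) (cyl n (extw hm n w')) := by
  rw [Set.disjoint_left]
  intro y hy hy'
  apply h
  funext i
  have h1 := hy i.1 i.2
  have h2 := hy' i.1 i.2
  simp [extw, i.2] at h1 h2
  rw [← h1, ← h2]

lemma IsLevelUnion.mono' {n n' : ℕ} (h : n ≤ n') {S : Set (ℕ → Fin m)}
    (hS : IsLevelUnion n S) : IsLevelUnion n' S :=
  fun x hx => (cyl_anti h x).trans (hS x hx)

lemma IsLevelUnion.compl' {n : ℕ} {S : Set (ℕ → Fin m)} (hS : IsLevelUnion n S) :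
    IsLevelUnion n Sᶜ := by
  intro x hx y hy hyS
  exact hx (hS y hyS (fun i hi => (hy i hi).symm))

lemma IsLevelUnion.inter' {n : ℕ} {A B : Set (ℕ → Fin m)} (hA : IsLevelUnion n A)
    (hB : IsLevelUnion n B) : IsLevelUnion n (A ∩ B) :=
  fun x hx => Set.subset_inter (hA x hx.1) (hB x hx.2)

lemma IsLevelUnion.biInter' {n : ℕ} {ι : Type*} (t : Finset ι) (f : ι → Set (ℕ → Fin m))
    (h : ∀ i ∈ t, IsLevelUnion n (f i)) : IsLevelUnion n (⋂ i ∈ t, f i) := by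
  intro x hx y hy
  simp only [Set.mem_iInter] at hx ⊢
  intro i hi
  exact h i hi x (hx i hi) hy

open Classical in
lemma measurableSet_levelUnion (hm : 0 < m) {n : ℕ} {S : Set (ℕ → Fin m)}
    (hS : IsLevelUnion n S) : MeasurableSet S := by
  classical
  have : S = ⋃ w ∈ Finset.univ.filter (fun w : Fin n → Fin m => cyl n (extw hm n w) ⊆ S),
      cyl n (extw hm n w) := by
    ext y
    simp only [Set.mem_iUnion, Finset.mem_filter, Finset.mem_univ, true_and]
    constructor
    · intro hy
      exact ⟨fun i => y i, by rw [cyl_extw_restrict]; exact hS y hy,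
        by rw [cyl_extw_restrict]; exact mem_cyl_self n y⟩
    · rintro ⟨w, hw, hyc⟩; exact hw hyc
  rw [this]
  exact (Finset.univ.filter _).measurableSet_biUnion fun w _ => measurableSet_cyl _ _

open Classical in
lemma measure_levelUnion (hm : 0 < m) (μ : Measure (ℕ → Fin m)) (n : ℕ)
    {S : Set (ℕ → Fin m)} (hS : IsLevelUnion n S) {E : Set (ℕ → Fin m)}
    (hE : MeasurableSet E) :
    μ (S ∩ E) = ∑ w ∈ Finset.univ.filter (fun w : Fin n → Fin m => cyl n (extw hm n w) ⊆ S),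
      μ (cyl n (extw hm n w) ∩ E) := by
  classical
  rw [← measure_biUnion_finset]
  · congr 1
    ext y
    simp only [Set.mem_iUnion, Finset.mem_filter, Finset.mem_univ, true_and,
      Set.mem_inter_iff]
    constructor
    · rintro ⟨hyS, hyE⟩
      refine ⟨fun i => y i, ?_, ?_, hyE⟩
      · rw [cyl_extw_restrict]; exact hS y hyS
      · rw [cyl_extw_restrict]; exact mem_cyl_self n y
    · rintro ⟨w, hw, hyc, hyE⟩; exact ⟨hw hyc, hyE⟩
  · intro w hw w' hw' hne
    exact ((cyl_extw_disjoint hm n hne).mono Set.inter_subset_left Set.inter_subset_left)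
  · intro w _
    exact (measurableSet_cyl _ _).inter hE

open Classical in
lemma measure_levelUnion_inter_ge (hm : 0 < m) (μ : Measure (ℕ → Fin m)) {n : ℕ}
    {S : Set (ℕ → Fin m)} (hS : IsLevelUnion n S) {E : Set (ℕ → Fin m)}
    (hE : MeasurableSet E) (K : ℝ≥0∞)
    (h : ∀ x, K * μ (cyl n x) ≤ μ (cyl n x ∩ E)) : K * μ S ≤ μ (S ∩ E) := by
  rw [measure_levelUnion hm μ n hS hE,
    show μ S = μ (S ∩ Set.univ) by rw [Set.inter_univ],
    measure_levelUnion hm μ n hS MeasurableSet.univ, Finset.mul_sum]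
  apply Finset.sum_le_sum
  intro w _
  simpa [Set.inter_univ] using h (extw hm n w)

lemma runA (hm : 0 < m) (μ : Measure (ℕ → Fin m)) (Γ : ℕ → Set (ℕ → Fin m))
    (hΓ : ∀ n, 1 ≤ n → IsLevelUnion n (Γ n)) (K : ℝ≥0∞)
    (hlow : ∀ n x, K * μ (cyl n x) ≤ μ (cyl n x ∩ Γ (n + 1))) :
    ∀ d n (S : Set (ℕ → Fin m)), IsLevelUnion n S →
      K ^ d * μ S ≤ μ (S ∩ ⋂ k ∈ Finset.Icc 1 d, Γ (n + k)) := by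
  intro d
  induction d with
  | zero => intro n S hS; simp
  | succ d ih =>
    intro n S hS
    have hS' : IsLevelUnion (n + 1) (S ∩ Γ (n + 1)) := by
      intro x hx
      exact Set.subset_inter ((cyl_anti (Nat.le_succ n) x).trans (hS x hx.1))
        (hΓ (n + 1) (Nat.le_add_left 1 n) x hx.2)
    have hKS : K * μ S ≤ μ (S ∩ Γ (n + 1)) :=
      measure_levelUnion_inter_ge hm μ hS
        (measurableSet_levelUnion hm (hΓ (n + 1) (Nat.le_add_left 1 n))) K (hlow n)
    have hrest := ih (n + 1) (S ∩ Γ (n + 1)) hS'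
    have hsets : (S ∩ Γ (n + 1)) ∩ ⋂ k ∈ Finset.Icc 1 d, Γ (n + 1 + k)
        = S ∩ ⋂ k ∈ Finset.Icc 1 (d + 1), Γ (n + k) := by
      ext y
      simp only [Set.mem_inter_iff, Set.mem_iInter, Finset.mem_Icc]
      constructor
      · rintro ⟨⟨hyS, hy1⟩, h⟩
        refine ⟨hyS, fun k hk => ?_⟩
        rcases eq_or_lt_of_le hk.1 with h1 | h1
        · rw [← h1]; exact hy1
        · have hmem := h (k - 1) ⟨by omega, by omega⟩
          have he : n + 1 + (k - 1) = n + k := by omega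
          rwa [he] at hmem
      · rintro ⟨hyS, h⟩
        refine ⟨⟨hyS, by simpa using h 1 ⟨le_refl 1, by omega⟩⟩, fun k hk => ?_⟩
        have hmem := h (k + 1) ⟨by omega, by omega⟩
        have he : n + (k + 1) = n + 1 + k := by omega
        rwa [he] at hmem
    calc K ^ (d + 1) * μ S = K ^ d * (K * μ S) := by ring
      _ ≤ K ^ d * μ (S ∩ Γ (n + 1)) := mul_le_mul_right hKS _
      _ ≤ μ ((S ∩ Γ (n + 1)) ∩ ⋂ k ∈ Finset.Icc 1 d, Γ (n + 1 + k)) := hrest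
      _ = _ := by rw [hsets]

end Aux

theorem ae_arbitrarily_long_marked_runs (m : ℕ) (hm : 2 ≤ m)
    (μ : Measure (ℕ → Fin m)) [IsFiniteMeasure μ] (Γ : ℕ → Set (ℕ → Fin m))
    (hΓ : ∀ n, 1 ≤ n → IsLevelUnion n (Γ n))
    (K : ℝ≥0∞) (hK : 0 < K)
    (hlow : ∀ n : ℕ, ∀ x : ℕ → Fin m, K * μ (cyl n x) ≤ μ (cyl n x ∩ Γ (n + 1))) :
    ∀ᵐ x ∂μ, ∀ d : ℕ, 0 < d →
      ∃ n : ℕ, ∀ k : ℕ, 1 ≤ k → k ≤ d → cyl (n + k) x ⊆ Γ (n + k) := by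
  have hm0 : 0 < m := by omega
  -- replace K by min K 1
  set K' : ℝ≥0∞ := min K 1 with hK'def
  have hK' : 0 < K' := lt_min hK zero_lt_one
  have hK'1 : K' ≤ 1 := min_le_right _ _
  have hlow' : ∀ n x, K' * μ (cyl n x) ≤ μ (cyl n x ∩ Γ (n + 1)) := fun n x =>
    le_trans (mul_le_mul_left (min_le_left _ _) _) (hlow n x)
  rw [ae_all_iff]
  intro d
  -- the bad set
  set Bad : Set (ℕ → Fin m) :=
    {x | ¬ ∃ n : ℕ, ∀ k : ℕ, 1 ≤ k → k ≤ d → cyl (n + k) x ⊆ Γ (n + k)} with hBadDef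
  suffices hnull : μ Bad = 0 by
    rw [ae_iff]
    refine measure_mono_null ?_ hnull
    intro x hx
    simp only [Set.mem_setOf_eq] at hx ⊢
    exact fun h => hx fun _ => h
  set q : ℝ≥0∞ := K' ^ d with hqdef
  have hq0 : q ≠ 0 := pow_ne_zero d hK'.ne'
  have hq1 : q ≤ 1 := pow_le_one' hK'1 d
  set G : ℕ → Set (ℕ → Fin m) := fun j => ⋂ k ∈ Finset.Icc 1 d, Γ (j * d + k) with hGdef
  have hGlu : ∀ j, IsLevelUnion ((j + 1) * d) (G j) := by
    intro j
    apply IsLevelUnion.biInter'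
    intro k hk
    rw [Finset.mem_Icc] at hk
    exact (hΓ (j * d + k) (by omega)).mono' (by nlinarith [hk.1, hk.2])
  have hGmeas : ∀ j, MeasurableSet (G j) := fun j => measurableSet_levelUnion hm0 (hGlu j)
  set F : ℕ → Set (ℕ → Fin m) := fun N => ⋂ j ∈ Finset.range N, (G j)ᶜ with hFdef
  have hFlu : ∀ N, IsLevelUnion (N * d) (F N) := by
    intro N
    apply IsLevelUnion.biInter'
    intro j hj
    rw [Finset.mem_range] at hj
    exact ((hGlu j).compl').mono' (by nlinarith)
  have hGF : ∀ N, q * μ (F N) ≤ μ (F N ∩ G N) := by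
    intro N
    have := runA hm0 μ Γ hΓ K' hlow' d (N * d) (F N) (hFlu N)
    exact this
  have hstep : ∀ N, μ (F (N + 1)) ≤ (1 - q) * μ (F N) := by
    intro N
    have hFsucc : F (N + 1) = F N ∩ (G N)ᶜ := by
      simp only [hFdef, Finset.range_add_one, Finset.mem_insert]
      ext y
      simp only [Set.mem_iInter, Finset.mem_insert, Finset.mem_range, Set.mem_inter_iff,
        Set.mem_compl_iff]
      constructor
      · intro h
        exact ⟨fun j hj => h j (Or.inr hj), h N (Or.inl rfl)⟩
      · rintro ⟨h1, h2⟩ j hj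
        rcases hj with rfl | hj
        · exact h2
        · exact h1 j hj
    have hadd := measure_inter_add_diff (μ := μ) (F N) (hGmeas N)
    have hdiff : F N \ G N = F N ∩ (G N)ᶜ := Set.diff_eq (F N) (G N)
    have h1 : μ (F (N + 1)) = μ (F N) - μ (F N ∩ G N) := by
      rw [hFsucc, ← hdiff]
      exact ENNReal.eq_sub_of_add_eq (measure_ne_top μ _) (by rw [add_comm]; exact hadd)
    rw [h1]
    have h2 : μ (F N) - μ (F N ∩ G N) ≤ μ (F N) - q * μ (F N) :=
      tsub_le_tsub_left (hGF N) _
    refine h2.trans (le_of_eq ?_)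
    rw [ENNReal.sub_mul (fun _ _ => measure_ne_top μ _), one_mul]
  have hbound : ∀ N, μ (F N) ≤ (1 - q) ^ N * μ Set.univ := by
    intro N
    induction N with
    | zero =>
      simp only [pow_zero, one_mul]
      exact measure_mono (Set.subset_univ _)
    | succ N ih =>
      calc μ (F (N + 1)) ≤ (1 - q) * μ (F N) := hstep N
        _ ≤ (1 - q) * ((1 - q) ^ N * μ Set.univ) := mul_le_mul_right ih _
        _ = (1 - q) ^ (N + 1) * μ Set.univ := by ring
  have hBadF : ∀ N, Bad ⊆ F N := by
    intro N x hx
    simp only [hFdef, Set.mem_iInter, Set.mem_compl_iff, Finset.mem_range]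
    intro j _
    intro hxG
    apply hx
    refine ⟨j * d, fun k hk1 hk2 => ?_⟩
    have hxΓ : x ∈ Γ (j * d + k) := by
      simp only [hGdef, Set.mem_iInter, Finset.mem_Icc] at hxG
      exact hxG k ⟨hk1, hk2⟩
    exact hΓ (j * d + k) (by omega) x hxΓ
  have htends : Tendsto (fun N => (1 - q) ^ N * μ Set.univ) atTop (nhds 0) := by
    have hlt : 1 - q < 1 := ENNReal.sub_lt_self one_ne_top one_ne_zero hq0
    have := ENNReal.Tendsto.mul_const
      (ENNReal.tendsto_pow_atTop_nhds_zero_of_lt_one hlt)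
      (Or.inr (measure_ne_top μ Set.univ))
    simpa using this
  have : μ Bad ≤ 0 :=
    ge_of_tendsto' htends fun N => le_trans (measure_mono (hBadF N)) (hbound N)
  exact le_antisymm this zero_le
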